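/- Monotonicity of level averages: let β ∈ (0,1), λ > 0, and let ū : T_m → ℝ be nonnegative, constant on each level (ū(x) = g(|x|) for some g : ℕ → ℝ), and satisfy Δ_β ū(x) + λ ū(x) ≤ 0 for all x ∈ T_m. Then g is non-increasing: g(k+1) ≤ g(k) for all k ≥ 0. -/

import Mathlib

open Filter Finset Topology

/-- The weight `p_β`: `1` if `β = 0`, and `β/(1-β)` otherwise. -/
noncomputable def pB (β : ℝ) : ℝ := if β = 0 then 1 else β / (1 - β)

/-- Vertices of the regular `m`-branching tree are finite sequences over `Fin m`
(the root is `[]`, the successors of `x` are `i :: x`, the predecessor of `a :: t` is `t`,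
and the level `|x|` is the list length).  The `β`-Laplacian on the tree. -/
noncomputable def lapB (m : ℕ) (β : ℝ) (u : List (Fin m) → ℝ) : List (Fin m) → ℝ
  | [] => (∑ i : Fin m, u [i]) / m - u []
  | a :: t =>
      (β * u t + (1 - β) * (∑ i : Fin m, u (i :: a :: t)) / m - u (a :: t)) *
        pB β ^ (-((a :: t).length : ℤ))

/-- A branch: an infinite path starting at the root, following successors. -/
def IsBranch (m : ℕ) (b : ℕ → List (Fin m)) : Prop :=
  b 0 = [] ∧ ∀ n, ∃ i : Fin m, b (n + 1) = i :: b n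

/-- Homogeneous Dirichlet boundary condition: `u → 0` along every branch. -/
def ZeroOnBoundary (m : ℕ) (u : List (Fin m) → ℝ) : Prop :=
  ∀ b : ℕ → List (Fin m), IsBranch m b → Tendsto (fun n => u (b n)) atTop (𝓝 0)

/-- `lam` is a principal eigenvalue of `Δ_β`: it is positive and admits a bounded
nonnegative nontrivial eigenfunction vanishing on the boundary. -/
def IsPrincipalEigenvalue (m : ℕ) (β lam : ℝ) : Prop :=
  0 < lam ∧ ∃ u : List (Fin m) → ℝ,
    (∃ M, ∀ x, |u x| ≤ M) ∧ (∀ x, 0 ≤ u x) ∧ u ≠ 0 ∧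
    (∀ x, -lapB m β u x = lam * u x) ∧ ZeroOnBoundary m u

/-- Membership in the set `A_β`. -/
def memA (m : ℕ) (β lam : ℝ) : Prop :=
  0 < lam ∧ ∃ v : List (Fin m) → ℝ, ∃ c C : ℝ, 0 < c ∧
    (∀ x, c < v x ∧ v x < C) ∧ ∀ x, lapB m β v x + lam * v x ≤ 0

/-- `λ₁(β) = sup A_β`. -/
noncomputable def lam1 (m : ℕ) (β : ℝ) : ℝ := sSup {lam | memA m β lam}

theorem stmt7 (m : ℕ) (hm : 2 ≤ m) (β : ℝ) (hβ0 : 0 < β) (hβ1 : β < 1)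
    (lam : ℝ) (hl : 0 < lam) (g : ℕ → ℝ) (hg : ∀ k, 0 ≤ g k)
    (hsub : ∀ x : List (Fin m),
      lapB m β (fun y => g y.length) x + lam * g x.length ≤ 0) :
    ∀ k : ℕ, g (k + 1) ≤ g k := by
  have hm0 : (0:ℝ) < m := by positivity
  have hp : 0 < pB β := by
    rw [pB, if_neg hβ0.ne']
    exact div_pos hβ0 (by linarith)
  have i0 : Fin m := ⟨0, by omega⟩
  intro k
  induction k with
  | zero =>
      have h := hsub []
      simp only [lapB, List.length_nil] at h
      have hs : (∑ _i : Fin m, g [(_i : Fin m)].length) = m * g 1 := by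
        simp [mul_comm]
      rw [hs] at h
      have he : (m:ℝ) * g 1 / m = g 1 := by field_simp
      rw [he] at h
      nlinarith [hg 0, mul_nonneg hl.le (hg 0)]
  | succ k ih =>
      have h := hsub (i0 :: List.replicate k i0)
      simp only [lapB] at h
      have hlen : (i0 :: List.replicate k i0).length = k + 1 := by simp
      have hlent : (List.replicate k i0).length = k := by simp
      rw [hlent] at h
      have hs : (∑ _i : Fin m, g (_i :: i0 :: List.replicate k i0).length)
          = m * g (k+2) := by
        simp [hlent, mul_comm]
      rw [hs, hlen] at h
      have hP : (0:ℝ) < pB β ^ (-((k+1:ℕ) : ℤ)) := zpow_pos hp _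
      have hA : β * g k + (1 - β) * (m * g (k+2)) / m - g (k + 1) ≤ 0 := by
        by_contra hc
        push_neg at hc
        nlinarith [mul_pos hc hP, mul_nonneg hl.le (hg (k+1))]
      have he : (1 - β) * ((m:ℝ) * g (k+2)) / m = (1 - β) * g (k+2) := by
        field_simp
      rw [he] at hA
      nlinarith
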